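/- Let x ∈ {0,1}^n with |x|_1 > k, where k < n/2. Under bit-wise mutation with flip probability 1/n, the probability that the offspring has exactly k ones is at least C(|x|_1, |x|_1 − k) / (e · n^{|x|_1 − k}), the probability that the offspring has fewer than k ones is at most C(|x|_1, |x|_1 − k + 1) / n^{|x|_1 − k + 1}, and the ratio of the former to the latter is at least n(|x|_1 − k + 1)/(e·k) ≥ 1. -/

import Mathlib

/-- Number of 1-bits of a binary string. -/
def onesCount {n : ℕ} (x : Fin n → Bool) : ℕ :=
  (Finset.univ.filter fun i => x i = true).card

/-- Probability that bit-wise mutation with flip probability `1/n` turns `x` into `y`. -/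
noncomputable def mutProb (n : ℕ) (x y : Fin n → Bool) : ℝ :=
  (1 / (n : ℝ)) ^ (hammingDist x y) * (1 - 1 / (n : ℝ)) ^ (n - hammingDist x y)

namespace MutAux

open Finset

variable {n : ℕ}

/-- Flip the bits of `x` in positions `s`. -/
def flipSet (x : Fin n → Bool) (s : Finset (Fin n)) : Fin n → Bool :=
  fun i => if i ∈ s then !(x i) else x i

lemma flipSet_bijective (x : Fin n → Bool) : Function.Bijective (flipSet x) := by
  rw [Function.bijective_iff_has_inverse]
  refine ⟨fun y => Finset.univ.filter fun i => y i ≠ x i, ?_, ?_⟩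
  · intro s
    ext i
    simp only [Finset.mem_filter, Finset.mem_univ, true_and, flipSet]
    by_cases h : i ∈ s <;> cases hx : x i <;> simp [h, hx]
  · intro y
    funext i
    simp only [flipSet, Finset.mem_filter, Finset.mem_univ, true_and]
    by_cases h : y i = x i <;> cases hy : y i <;> cases hx' : x i <;> simp_all

lemma hammingDist_flipSet (x : Fin n → Bool) (s : Finset (Fin n)) :
    hammingDist x (flipSet x s) = s.card := by
  unfold hammingDist
  congr 1
  ext i
  simp only [Finset.mem_filter, Finset.mem_univ, true_and, flipSet]
  by_cases h : i ∈ s <;> cases hx : x i <;> simp [h, hx]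

lemma mutProb_flipSet (x : Fin n → Bool) (s : Finset (Fin n)) :
    mutProb n x (flipSet x s)
      = (1 / (n : ℝ)) ^ s.card * (1 - 1 / (n : ℝ)) ^ (n - s.card) := by
  rw [mutProb, hammingDist_flipSet]

lemma onesCount_flipSet (x : Fin n → Bool) (s : Finset (Fin n)) :
    onesCount (flipSet x s)
      = ((Finset.univ.filter fun i => x i = true) \ s).card
        + (s \ (Finset.univ.filter fun i => x i = true)).card := by
  classical
  rw [onesCount, ← Finset.card_union_of_disjoint disjoint_sdiff_sdiff]
  congr 1
  ext i
  simp only [Finset.mem_filter, Finset.mem_univ, true_and, Finset.mem_union,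
    Finset.mem_sdiff, flipSet]
  by_cases h : i ∈ s <;> cases hx : x i <;> simp [h, hx]

lemma sum_transfer (x : Fin n → Bool) (P : (Fin n → Bool) → Prop) [DecidablePred P] :
    ∑ y ∈ Finset.univ.filter P, mutProb n x y
      = ∑ s ∈ Finset.univ.filter (fun s => P (flipSet x s)),
          (1 / (n : ℝ)) ^ s.card * (1 - 1 / (n : ℝ)) ^ (n - s.card) := by
  rw [Finset.sum_filter, Finset.sum_filter]
  refine (Fintype.sum_bijective (flipSet x) (flipSet_bijective x) _ _ fun s => ?_).symm
  rw [mutProb_flipSet]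

lemma sum_powerset_weight (U : Finset (Fin n)) (a b : ℝ) :
    ∑ t ∈ U.powerset, a ^ t.card * b ^ (U.card - t.card) = (a + b) ^ U.card := by
  calc ∑ t ∈ U.powerset, a ^ t.card * b ^ (U.card - t.card)
      = ∑ t ∈ U.powerset, (∏ _i ∈ t, a) * ∏ _i ∈ U \ t, b := by
        refine Finset.sum_congr rfl fun t ht => ?_
        rw [Finset.prod_const, Finset.prod_const,
          Finset.card_sdiff_of_subset (Finset.mem_powerset.1 ht)]
    _ = ∏ _i ∈ U, (a + b) := (Finset.prod_add _ _ _).symm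
    _ = (a + b) ^ U.card := Finset.prod_const _

/-- The total mutation weight of all flip-sets containing a fixed set `T`. -/
lemma sum_superset_weight (hn : 0 < n) (T : Finset (Fin n)) :
    ∑ s ∈ Finset.univ.filter (fun s : Finset (Fin n) => T ⊆ s),
        (1 / (n : ℝ)) ^ s.card * (1 - 1 / (n : ℝ)) ^ (n - s.card)
      = (1 / (n : ℝ)) ^ T.card := by
  classical
  have key : ∑ s ∈ Finset.univ.filter (fun s : Finset (Fin n) => T ⊆ s),
        (1 / (n : ℝ)) ^ s.card * (1 - 1 / (n : ℝ)) ^ (n - s.card)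
      = ∑ u ∈ Tᶜ.powerset,
          (1 / (n : ℝ)) ^ (u.card + T.card)
            * (1 - 1 / (n : ℝ)) ^ (Tᶜ.card - u.card) := by
    refine Finset.sum_nbij' (fun s => s \ T) (fun u => u ∪ T) ?_ ?_ ?_ ?_ ?_
    · intro s hs
      simp only [Finset.mem_filter, Finset.mem_univ, true_and] at hs
      simp only [Finset.mem_powerset]
      intro i hi
      simp only [Finset.mem_sdiff] at hi
      simp [Finset.mem_compl, hi.2]
    · intro u _; simp
    · intro s hs
      simp only [Finset.mem_filter, Finset.mem_univ, true_and] at hs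
      exact Finset.sdiff_union_of_subset hs
    · intro u hu
      simp only [Finset.mem_powerset] at hu
      show (u ∪ T) \ T = u
      rw [Finset.union_sdiff_right, Finset.sdiff_eq_self_iff_disjoint]
      exact Finset.disjoint_left.2 fun i hiu hiT => by
        have h3 := hu hiu
        simp only [Finset.mem_compl] at h3
        exact h3 hiT
    · intro s hs
      simp only [Finset.mem_filter, Finset.mem_univ, true_and] at hs
      have hcard : (s \ T).card + T.card = s.card := by
        rw [Finset.card_sdiff_of_subset hs]
        exact Nat.sub_add_cancel (Finset.card_le_card hs)
      have hcard2 : Tᶜ.card - (s \ T).card = n - s.card := by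
        rw [Finset.card_compl, Fintype.card_fin, ← hcard]
        omega
      rw [hcard, hcard2]
  rw [key]
  have : ∀ u ∈ Tᶜ.powerset,
      (1 / (n : ℝ)) ^ (u.card + T.card) * (1 - 1 / (n : ℝ)) ^ (Tᶜ.card - u.card)
        = (1 / (n : ℝ)) ^ T.card
          * ((1 / (n : ℝ)) ^ u.card * (1 - 1 / (n : ℝ)) ^ (Tᶜ.card - u.card)) := by
    intro u _
    rw [pow_add]
    ring
  rw [Finset.sum_congr rfl this, ← Finset.mul_sum, sum_powerset_weight]
  have : (1 / (n : ℝ) + (1 - 1 / (n : ℝ))) = 1 := by ring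
  rw [this, one_pow, mul_one]

lemma union_bound {ι κ : Type*} [DecidableEq ι] (S : Finset ι) (Ts : Finset κ)
    (A : κ → Finset ι) (f : ι → ℝ) (hf : ∀ i, 0 ≤ f i)
    (h : ∀ i ∈ S, ∃ T ∈ Ts, i ∈ A T) :
    ∑ i ∈ S, f i ≤ ∑ T ∈ Ts, ∑ i ∈ A T, f i := by
  classical
  calc ∑ i ∈ S, f i ≤ ∑ i ∈ Ts.biUnion A, f i :=
        Finset.sum_le_sum_of_subset_of_nonneg
          (fun i hi => Finset.mem_biUnion.2 (h i hi)) (fun i _ _ => hf i)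
    _ ≤ ∑ T ∈ Ts, ∑ i ∈ A T, f i := by
        clear h
        induction Ts using Finset.induction_on with
        | empty => simp
        | @insert a t hat ih =>
          rw [Finset.biUnion_insert, Finset.sum_insert hat]
          calc ∑ i ∈ A a ∪ t.biUnion A, f i
              ≤ ∑ i ∈ A a, f i + ∑ i ∈ t.biUnion A, f i := by
                have h2 := Finset.sum_union_inter (s₁ := A a) (s₂ := t.biUnion A) (f := f)
                have h3 : 0 ≤ ∑ i ∈ A a ∩ t.biUnion A, f i :=
                  Finset.sum_nonneg fun i _ => hf i
                linarith
            _ ≤ ∑ i ∈ A a, f i + ∑ T ∈ t, ∑ i ∈ A T, f i := by linarith [ih]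

lemma exp_neg_one_le (hn : 2 ≤ n) (d : ℕ) (hd : 1 ≤ d) :
    Real.exp (-1) ≤ (1 - 1 / (n : ℝ)) ^ (n - d) := by
  have hn1 : (1 : ℝ) ≤ (n : ℝ) - 1 := by
    have : (2 : ℝ) ≤ (n : ℝ) := by exact_mod_cast hn
    linarith
  have hnpos : (0 : ℝ) < (n : ℝ) := by positivity
  have hbase0 : (0 : ℝ) ≤ 1 - 1 / (n : ℝ) := by
    rw [sub_nonneg, div_le_one hnpos]; linarith
  have hbase1 : 1 - 1 / (n : ℝ) ≤ 1 := by
    have : 0 ≤ 1 / (n : ℝ) := by positivity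
    linarith
  have step1 : (1 - 1 / (n : ℝ)) ^ (n - 1) ≤ (1 - 1 / (n : ℝ)) ^ (n - d) :=
    pow_le_pow_of_le_one hbase0 hbase1 (by omega)
  have hexp : Real.exp (-(1 / ((n : ℝ) - 1))) ≤ 1 - 1 / (n : ℝ) := by
    have h1 : 1 / ((n : ℝ) - 1) + 1 ≤ Real.exp (1 / ((n : ℝ) - 1)) :=
      Real.add_one_le_exp _
    have hpos : (0 : ℝ) < 1 / ((n : ℝ) - 1) + 1 := by positivity
    have hpos2 : (0:ℝ) < 1 - 1 / (n:ℝ) := by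
      rw [sub_pos, div_lt_one hnpos]; linarith
    rw [Real.exp_neg]
    rw [inv_le_comm₀ (Real.exp_pos _) hpos2]
    calc (1 - 1 / (n : ℝ))⁻¹ = 1 / ((n : ℝ) - 1) + 1 := by
          have hn0 : (n:ℝ) ≠ 0 := by positivity
          have hn1' : (n:ℝ) - 1 ≠ 0 := by linarith
          rw [inv_eq_iff_eq_inv, eq_comm, inv_eq_iff_eq_inv, eq_comm]
          field_simp
          ring
      _ ≤ Real.exp (1 / ((n : ℝ) - 1)) := h1
  have step2 : Real.exp (-1) ≤ (1 - 1 / (n : ℝ)) ^ (n - 1) := by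
    have hpow : Real.exp (-(1 / ((n : ℝ) - 1))) ^ (n - 1) ≤ (1 - 1 / (n : ℝ)) ^ (n - 1) :=
      pow_le_pow_left₀ (Real.exp_pos _).le hexp _
    have heq : Real.exp (-(1 / ((n : ℝ) - 1))) ^ (n - 1) = Real.exp (-1) := by
      rw [← Real.exp_nat_mul]
      congr 1
      have hcast : ((n - 1 : ℕ) : ℝ) = (n : ℝ) - 1 := by
        have : 1 ≤ n := by omega
        push_cast [this]; ring
      rw [hcast]
      field_simp
    rw [← heq]
    exact hpow
  exact step2.trans step1

end MutAux

open Finset MutAux in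
/-- For `x` with `|x|₁ > k` where `1 ≤ k < n/2`: under bit-wise mutation, the
probability that the offspring has exactly `k` ones is at least
`C(|x|₁, |x|₁-k)/(e·n^(|x|₁-k))`, the probability that it has fewer than `k` ones is
at most `C(|x|₁, |x|₁-k+1)/n^(|x|₁-k+1)`, and the former is at least
`n(|x|₁-k+1)/(e·k) ≥ 1` times the latter. -/
theorem mutation_reach_k_ones (n k : ℕ) (hk : 1 ≤ k) (hkn : 2 * k < n)
    (x : Fin n → Bool) (hx : k < onesCount x) :
    (∑ y ∈ Finset.univ.filter (fun y : Fin n → Bool => onesCount y = k), mutProb n x y)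
      ≥ ((onesCount x).choose (onesCount x - k) : ℝ) /
          (Real.exp 1 * (n : ℝ) ^ (onesCount x - k)) ∧
    (∑ y ∈ Finset.univ.filter (fun y : Fin n → Bool => onesCount y < k), mutProb n x y)
      ≤ ((onesCount x).choose (onesCount x - k + 1) : ℝ) /
          (n : ℝ) ^ (onesCount x - k + 1) ∧
    (∑ y ∈ Finset.univ.filter (fun y : Fin n → Bool => onesCount y = k), mutProb n x y)
      ≥ ((n : ℝ) * ((onesCount x : ℝ) - k + 1) / (Real.exp 1 * k)) *
        (∑ y ∈ Finset.univ.filter (fun y : Fin n → Bool => onesCount y < k), mutProb n x y) ∧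
    (n : ℝ) * ((onesCount x : ℝ) - k + 1) / (Real.exp 1 * k) ≥ 1 := by
  classical
  set O : Finset (Fin n) := Finset.univ.filter fun i => x i = true with hO
  set m : ℕ := onesCount x with hm
  have hmO : O.card = m := rfl
  set d : ℕ := m - k with hd
  have hd1 : 1 ≤ d := by omega
  have hmn : m ≤ n := by
    rw [hm, onesCount]
    exact (Finset.card_filter_le _ _).trans (by simp)
  have hn3 : 3 ≤ n := by omega
  have hnpos : (0 : ℝ) < (n : ℝ) := by positivity
  have hkm : k ≤ m := hx.le
  have hmd : m - d = k := by omega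
  have hcastd : ((d : ℕ) : ℝ) = (m : ℝ) - (k : ℝ) := by
    rw [hd]; push_cast [hkm]; ring
  have hw_nonneg : ∀ j : ℕ, 0 ≤ (1 / (n : ℝ)) ^ j * (1 - 1 / (n : ℝ)) ^ (n - j) := by
    intro j
    have h1 : (0 : ℝ) ≤ 1 - 1 / (n : ℝ) := by
      rw [sub_nonneg, div_le_one hnpos]
      exact_mod_cast Nat.one_le_iff_ne_zero.2 (by omega)
    positivity
  -- Part 1
  have part1 : (∑ y ∈ Finset.univ.filter (fun y : Fin n → Bool => onesCount y = k),
        mutProb n x y)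
      ≥ ((m.choose d : ℕ) : ℝ) / (Real.exp 1 * (n : ℝ) ^ d) := by
    rw [sum_transfer x (fun y => onesCount y = k)]
    have hsub : O.powersetCard d
        ⊆ Finset.univ.filter (fun s => onesCount (flipSet x s) = k) := by
      intro s hs
      rw [Finset.mem_powersetCard] at hs
      simp only [Finset.mem_filter, Finset.mem_univ, true_and]
      rw [onesCount_flipSet, ← hO]
      have h1 : s \ O = ∅ := Finset.sdiff_eq_empty_iff_subset.2 hs.1
      rw [h1, Finset.card_empty, Finset.card_sdiff_of_subset hs.1, hmO, hs.2, hmd, add_zero]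
    have hlow : ∑ s ∈ O.powersetCard d,
          (1 / (n : ℝ)) ^ s.card * (1 - 1 / (n : ℝ)) ^ (n - s.card)
        ≤ ∑ s ∈ Finset.univ.filter (fun s => onesCount (flipSet x s) = k),
          (1 / (n : ℝ)) ^ s.card * (1 - 1 / (n : ℝ)) ^ (n - s.card) :=
      Finset.sum_le_sum_of_subset_of_nonneg hsub fun s _ _ => hw_nonneg _
    have hval : ∑ s ∈ O.powersetCard d,
          (1 / (n : ℝ)) ^ s.card * (1 - 1 / (n : ℝ)) ^ (n - s.card)
        = (m.choose d : ℝ) * ((1 / (n : ℝ)) ^ d * (1 - 1 / (n : ℝ)) ^ (n - d)) := by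
      rw [Finset.sum_congr rfl (fun s hs => by
        rw [(Finset.mem_powersetCard.1 hs).2]), Finset.sum_const,
        Finset.card_powersetCard, hmO, nsmul_eq_mul]
    have hexp : Real.exp (-1) ≤ (1 - 1 / (n : ℝ)) ^ (n - d) :=
      exp_neg_one_le (by omega) d hd1
    have hfin : ((m.choose d : ℕ) : ℝ) / (Real.exp 1 * (n : ℝ) ^ d)
        ≤ (m.choose d : ℝ) * ((1 / (n : ℝ)) ^ d * (1 - 1 / (n : ℝ)) ^ (n - d)) := by
      have heq : ((m.choose d : ℕ) : ℝ) / (Real.exp 1 * (n : ℝ) ^ d)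
          = (m.choose d : ℝ) * ((1 / (n : ℝ)) ^ d * Real.exp (-1)) := by
        rw [Real.exp_neg, one_div, inv_pow, div_eq_mul_inv, mul_inv]
        ring
      rw [heq]
      have hch : (0 : ℝ) ≤ (m.choose d : ℝ) := by positivity
      have hpw : (0 : ℝ) ≤ (1 / (n : ℝ)) ^ d := by positivity
      exact mul_le_mul_of_nonneg_left
        (mul_le_mul_of_nonneg_left hexp hpw) hch
    calc ((m.choose d : ℕ) : ℝ) / (Real.exp 1 * (n : ℝ) ^ d)
        ≤ (m.choose d : ℝ) * ((1 / (n : ℝ)) ^ d * (1 - 1 / (n : ℝ)) ^ (n - d)) := hfin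
      _ = ∑ s ∈ O.powersetCard d,
          (1 / (n : ℝ)) ^ s.card * (1 - 1 / (n : ℝ)) ^ (n - s.card) := hval.symm
      _ ≤ _ := hlow
  -- Part 2
  have part2 : (∑ y ∈ Finset.univ.filter (fun y : Fin n → Bool => onesCount y < k),
        mutProb n x y)
      ≤ ((m.choose (d + 1) : ℕ) : ℝ) / (n : ℝ) ^ (d + 1) := by
    rw [sum_transfer x (fun y => onesCount y < k)]
    have hcover : ∀ s ∈ Finset.univ.filter (fun s => onesCount (flipSet x s) < k),
        ∃ T ∈ O.powersetCard (d + 1),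
          s ∈ Finset.univ.filter (fun s' : Finset (Fin n) => T ⊆ s') := by
      intro s hs
      simp only [Finset.mem_filter, Finset.mem_univ, true_and] at hs
      rw [onesCount_flipSet, ← hO] at hs
      have hOs : (O ∩ s).card + (O \ s).card = O.card :=
        Finset.card_inter_add_card_sdiff O s
      have hbig : d + 1 ≤ (O ∩ s).card := by omega
      obtain ⟨T, hTsub, hTcard⟩ := Finset.exists_subset_card_eq hbig
      refine ⟨T, ?_, ?_⟩
      · rw [Finset.mem_powersetCard]
        exact ⟨hTsub.trans Finset.inter_subset_left, hTcard⟩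
      · simp only [Finset.mem_filter, Finset.mem_univ, true_and]
        exact hTsub.trans Finset.inter_subset_right
    calc ∑ s ∈ Finset.univ.filter (fun s => onesCount (flipSet x s) < k),
          (1 / (n : ℝ)) ^ s.card * (1 - 1 / (n : ℝ)) ^ (n - s.card)
        ≤ ∑ T ∈ O.powersetCard (d + 1),
            ∑ s ∈ Finset.univ.filter (fun s' : Finset (Fin n) => T ⊆ s'),
              (1 / (n : ℝ)) ^ s.card * (1 - 1 / (n : ℝ)) ^ (n - s.card) :=
          union_bound _ _ _ _ (fun s => hw_nonneg s.card) hcover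
      _ = ∑ T ∈ O.powersetCard (d + 1), (1 / (n : ℝ)) ^ (d + 1) := by
          refine Finset.sum_congr rfl fun T hT => ?_
          rw [sum_superset_weight (by omega) T, (Finset.mem_powersetCard.1 hT).2]
      _ = ((m.choose (d + 1) : ℕ) : ℝ) / (n : ℝ) ^ (d + 1) := by
          rw [Finset.sum_const, Finset.card_powersetCard, hmO, nsmul_eq_mul,
            div_pow, one_pow]
          ring
  -- Part 4
  have hcast_n : (2 * (k : ℝ) + 1) ≤ (n : ℝ) := by exact_mod_cast hkn
  have hcast_k : (1 : ℝ) ≤ (k : ℝ) := by exact_mod_cast hk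
  have hcast_mk : (1 : ℝ) ≤ (m : ℝ) - (k : ℝ) := by
    have : (k : ℝ) + 1 ≤ (m : ℝ) := by exact_mod_cast hx
    linarith
  have he_pos : (0 : ℝ) < Real.exp 1 := Real.exp_pos 1
  have he_lt : Real.exp 1 < 2.7182818286 := Real.exp_one_lt_d9
  have part4 : (n : ℝ) * ((m : ℝ) - (k : ℝ) + 1) / (Real.exp 1 * k) ≥ 1 := by
    rw [ge_iff_le, le_div_iff₀ (by positivity)]
    nlinarith [mul_le_mul_of_nonneg_left hcast_n (by linarith : (0:ℝ) ≤ (m:ℝ) - k + 1)]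
  -- the key identity relating the two bounds
  have hchoose : ((m.choose (d + 1) : ℕ) : ℝ) * ((d : ℝ) + 1)
      = ((m.choose d : ℕ) : ℝ) * (k : ℝ) := by
    have h := Nat.choose_succ_right_eq m d
    rw [hmd] at h
    exact_mod_cast congrArg (fun t : ℕ => (t : ℝ)) h
  have hfactor_eq : (n : ℝ) * ((m : ℝ) - (k : ℝ) + 1) / (Real.exp 1 * k)
        * (((m.choose (d + 1) : ℕ) : ℝ) / (n : ℝ) ^ (d + 1))
      = ((m.choose d : ℕ) : ℝ) / (Real.exp 1 * (n : ℝ) ^ d) := by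
    rw [← hcastd]
    field_simp
    linear_combination ((n : ℝ) * (n : ℝ) ^ d) * hchoose
  -- Part 3
  have part3 : (∑ y ∈ Finset.univ.filter (fun y : Fin n → Bool => onesCount y = k),
        mutProb n x y)
      ≥ ((n : ℝ) * ((m : ℝ) - (k : ℝ) + 1) / (Real.exp 1 * k)) *
        (∑ y ∈ Finset.univ.filter (fun y : Fin n → Bool => onesCount y < k),
          mutProb n x y) := by
    have hfac_nonneg : (0 : ℝ) ≤ (n : ℝ) * ((m : ℝ) - (k : ℝ) + 1) / (Real.exp 1 * k) := by
      positivity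
    calc ((n : ℝ) * ((m : ℝ) - (k : ℝ) + 1) / (Real.exp 1 * k)) *
          (∑ y ∈ Finset.univ.filter (fun y : Fin n → Bool => onesCount y < k),
            mutProb n x y)
        ≤ ((n : ℝ) * ((m : ℝ) - (k : ℝ) + 1) / (Real.exp 1 * k)) *
          (((m.choose (d + 1) : ℕ) : ℝ) / (n : ℝ) ^ (d + 1)) :=
          mul_le_mul_of_nonneg_left part2 hfac_nonneg
      _ = ((m.choose d : ℕ) : ℝ) / (Real.exp 1 * (n : ℝ) ^ d) := hfactor_eq
      _ ≤ _ := part1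
  exact ⟨part1, part2, part3, part4⟩
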